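/- Let V be an N-module that is presented in degrees ≤ n with respect to the sup norm. Then V admits a resolution ⋯ → P² → P¹ → P⁰ → V → 0 in which every term P^j is a (possibly infinite) direct sum of modules P(y) with y of sup norm ≤ n. (Equivalently, hd_s(V) ≤ pd(V) = max{hd_0(V), hd_1(V)} for all s ≥ 0.) -/

import Mathlib

open CategoryTheory CategoryTheory.Limits

/-- The poset `ℕ →₀ ℕ` of finitely supported sequences of naturals, with pointwise order,
regarded as a thin category. -/
abbrev NPoset := ℕ →₀ ℕ

/-- The sup norm of `x : ℕ →₀ ℕ` is `max_i x i`. -/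
noncomputable def supNorm (x : NPoset) : ℕ := x.support.sup x

/-- `P x` is the `k`-linearization of the representable functor `N(x, -)`. -/
noncomputable def Pmod (k : Type) [CommRing k] (x : NPoset) : NPoset ⥤ ModuleCat k :=
  coyoneda.obj (Opposite.op x) ⋙ ModuleCat.free k

/-- `Q` is a (possibly infinite) direct sum of modules `P y` with `y ∈ S`. -/
def IsDirectSumOfP (k : Type) [CommRing k] (Q : NPoset ⥤ ModuleCat k) (S : Set NPoset) : Prop :=
  ∃ (ι : Type) (g : ι → NPoset) (_ : ∀ j, g j ∈ S)
    (incl : ∀ j, Pmod k (g j) ⟶ Q), Nonempty (IsColimit (Cofan.mk Q incl))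

/-- `V` is presented in degrees `≤ n` w.r.t. a norm: there is an exact sequence
`P¹ → P⁰ → V → 0` with `P⁰`, `P¹` direct sums of modules `P y` of norm `≤ n`. -/
def PresentedInDeg {k : Type} [CommRing k] (norm : NPoset → ℕ)
    (V : NPoset ⥤ ModuleCat k) (n : ℕ) : Prop :=
  ∃ (P1 P0 : NPoset ⥤ ModuleCat k) (d : P1 ⟶ P0) (p : P0 ⟶ V),
    IsDirectSumOfP k P1 {y | norm y ≤ n} ∧ IsDirectSumOfP k P0 {y | norm y ≤ n} ∧
    (∀ z : NPoset, Function.Surjective (p.app z)) ∧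
    (∀ z : NPoset, Function.Exact (d.app z) (p.app z))

/-- `V` admits a resolution `⋯ → P² → P¹ → P⁰ → V → 0` in which every term belongs to the
class of functors cut out by the predicate `good`. -/
def HasResolutionBy {k : Type} [CommRing k] (V : NPoset ⥤ ModuleCat k)
    (good : ℕ → (NPoset ⥤ ModuleCat k) → Prop) : Prop :=
  ∃ (P : ℕ → (NPoset ⥤ ModuleCat k)) (d : ∀ j : ℕ, P (j + 1) ⟶ P j) (p : P 0 ⟶ V),
    (∀ j, good j (P j)) ∧
    (∀ z : NPoset, Function.Surjective (p.app z)) ∧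
    (∀ z : NPoset, Function.Exact ((d 0).app z) (p.app z)) ∧
    (∀ (j : ℕ) (z : NPoset), Function.Exact ((d (j + 1)).app z) ((d j).app z))

/-! ### Auxiliary constructions -/

/-- Pointwise truncation of `z` at `n`. -/
noncomputable def tr (n : ℕ) (z : NPoset) : NPoset :=
  Finsupp.mapRange (fun a => min a n) (Nat.zero_min n) z

lemma tr_le (n : ℕ) (z : NPoset) : tr n z ≤ z :=
  Finsupp.le_def.2 fun i => by simp [tr, Finsupp.mapRange_apply]

lemma supNorm_tr_le (n : ℕ) (z : NPoset) : supNorm (tr n z) ≤ n :=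
  Finset.sup_le fun i _ => by simp [tr, Finsupp.mapRange_apply]

lemma apply_le_of_supNorm_le {n : ℕ} {y : NPoset} (hy : supNorm y ≤ n) (i : ℕ) : y i ≤ n := by
  by_cases h : y i = 0
  · simp [h]
  · exact le_trans (Finset.le_sup (Finsupp.mem_support_iff.2 h)) hy

lemma le_tr {n : ℕ} {y z : NPoset} (hy : supNorm y ≤ n) (hz : y ≤ z) : y ≤ tr n z :=
  Finsupp.le_def.2 fun i => by
    simp only [tr, Finsupp.mapRange_apply]
    exact le_min (Finsupp.le_def.1 hz i) (apply_le_of_supNorm_le hy i)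

noncomputable def tHom (n : ℕ) (z : NPoset) : tr n z ⟶ z := homOfLE (tr_le n z)

noncomputable def trF (n : ℕ) : NPoset ⥤ NPoset where
  obj := tr n
  map {z z'} f := homOfLE (Finsupp.le_def.2 fun i => by
    simp only [tr, Finsupp.mapRange_apply]
    exact min_le_min (Finsupp.le_def.1 (leOfHom f) i) le_rfl)

variable {k : Type} [CommRing k]

/-- An `N`-module is "good" for `n` if all its transition maps from truncated degrees are
bijective; this characterizes modules coming from the truncated poset. -/
def GoodF (n : ℕ) (M : NPoset ⥤ ModuleCat k) : Prop :=
  ∀ z, Function.Bijective (M.map (tHom n z))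

noncomputable def eps (n : ℕ) (M : NPoset ⥤ ModuleCat k) : trF n ⋙ M ⟶ M where
  app z := M.map (tHom n z)
  naturality z z' f := by
    have h : (trF n).map f ≫ tHom n z' = tHom n z ≫ f := Subsingleton.elim _ _
    rw [Functor.comp_map]
    exact (M.map_comp _ _).symm.trans ((congrArg M.map h).trans (M.map_comp _ _))

lemma eps_natural (n : ℕ) {A B : NPoset ⥤ ModuleCat k} (f : A ⟶ B) :
    Functor.whiskerLeft (trF n) f ≫ eps n B = eps n A ≫ f := by
  apply NatTrans.ext
  funext z
  exact (f.naturality (tHom n z)).symm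

lemma goodF_Pmod {n : ℕ} {y : NPoset} (hy : supNorm y ≤ n) : GoodF n (Pmod k y) := by
  intro z
  let e : (y ⟶ tr n z) ≃ (y ⟶ z) :=
    { toFun := fun h => h ≫ tHom n z
      invFun := fun h => homOfLE (le_tr hy (leOfHom h))
      left_inv := fun _ => Subsingleton.elim _ _
      right_inv := fun _ => Subsingleton.elim _ _ }
  have hcoe : ⇑((Pmod k y).map (tHom n z)) = ⇑(Finsupp.domCongr (M := k) e) := by
    funext x
    exact (Finsupp.equivMapDomain_eq_mapDomain e x).symm
  rw [hcoe]
  exact (Finsupp.domCongr (M := k) e).bijective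

lemma goodF_iff_isIso (n : ℕ) (M : NPoset ⥤ ModuleCat k) : GoodF n M ↔ IsIso (eps n M) := by
  constructor
  · intro h
    have : ∀ z, IsIso ((eps n M).app z) := fun z =>
      (ConcreteCategory.isIso_iff_bijective _).2 (h z)
    haveI := this
    exact NatIso.isIso_of_isIso_app _
  · intro h z
    have : IsIso ((eps n M).app z) := inferInstance
    haveI : IsIso (M.map (tHom n z)) := this
    exact ConcreteCategory.bijective_of_isIso (M.map (tHom n z))

lemma goodF_of_isDirectSum {n : ℕ} {Q : NPoset ⥤ ModuleCat k}
    (hQ : IsDirectSumOfP k Q {y | supNorm y ≤ n}) : GoodF n Q := by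
  obtain ⟨ι, g, hg, incl, ⟨hc⟩⟩ := hQ
  haveI hP : ∀ j, IsIso (eps n (Pmod k (g j))) :=
    fun j => (goodF_iff_isIso n _).1 (goodF_Pmod (hg j))
  rw [goodF_iff_isIso]
  let leg : ∀ j, Pmod k (g j) ⟶ trF n ⋙ Q :=
    fun j => inv (eps n (Pmod k (g j))) ≫ Functor.whiskerLeft (trF n) (incl j)
  let ψ : Q ⟶ trF n ⋙ Q := hc.desc (Cofan.mk (trF n ⋙ Q) leg)
  have hψ : ∀ j, incl j ≫ ψ = leg j := fun j => hc.fac _ ⟨j⟩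
  have h1 : ψ ≫ eps n Q = 𝟙 Q := by
    apply hc.hom_ext
    rintro ⟨j⟩
    show incl j ≫ ψ ≫ eps n Q = incl j ≫ 𝟙 Q
    rw [← Category.assoc, hψ j, Category.comp_id]
    show (inv (eps n (Pmod k (g j))) ≫ Functor.whiskerLeft (trF n) (incl j)) ≫ eps n Q = incl j
    rw [Category.assoc, eps_natural, ← Category.assoc, IsIso.inv_hom_id, Category.id_comp]
  have h2 : eps n Q ≫ ψ = 𝟙 (trF n ⋙ Q) := by
    let G := (Functor.whiskeringLeft NPoset NPoset (ModuleCat k)).obj (trF n)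
    have hc2 := isColimitOfPreserves G hc
    apply hc2.hom_ext
    rintro ⟨j⟩
    show G.map (incl j) ≫ eps n Q ≫ ψ = G.map (incl j) ≫ 𝟙 _
    rw [Category.comp_id]
    show Functor.whiskerLeft (trF n) (incl j) ≫ eps n Q ≫ ψ = Functor.whiskerLeft (trF n) (incl j)
    rw [← Category.assoc, eps_natural, Category.assoc, hψ j]
    show eps n (Pmod k (g j)) ≫ inv (eps n (Pmod k (g j))) ≫ Functor.whiskerLeft (trF n) (incl j) = _
    rw [← Category.assoc, IsIso.hom_inv_id, Category.id_comp]
  exact ⟨ψ, h2, h1⟩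

/-- The map `Pmod k y ⟶ M` classifying an element `m : M.obj y`. -/
noncomputable def elemHom (M : NPoset ⥤ ModuleCat k) (y : NPoset) (m : M.obj y) :
    Pmod k y ⟶ M where
  app z := ModuleCat.ofHom ((Finsupp.lift (M.obj z) k (y ⟶ z)) (fun h => M.map h m))
  naturality z z' f := by
    apply ModuleCat.hom_ext
    apply Finsupp.lhom_ext
    intro h b
    show (Finsupp.lift (M.obj z') k (y ⟶ z') (fun h => M.map h m))
        (Finsupp.mapDomain (fun g => g ≫ f) (Finsupp.single h b)) =
      M.map f ((Finsupp.lift (M.obj z) k (y ⟶ z) (fun h => M.map h m)) (Finsupp.single h b))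
    rw [Finsupp.mapDomain_single]
    rw [Finsupp.lift_apply, Finsupp.lift_apply, Finsupp.sum_single_index (by simp),
      Finsupp.sum_single_index (by simp)]
    simp

lemma elemHom_single (M : NPoset ⥤ ModuleCat k) (y : NPoset) (m : M.obj y) {z : NPoset}
    (h : y ⟶ z) (c : k) : (elemHom M y m).app z (Finsupp.single h c) = c • M.map h m := by
  show (Finsupp.lift (M.obj z) k (y ⟶ z) (fun h => M.map h m)) (Finsupp.single h c) = _
  rw [Finsupp.lift_apply, Finsupp.sum_single_index (by simp)]

/-- Index type for the canonical low-degree free cover of `M`. -/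
def FreeIx (n : ℕ) (M : NPoset ⥤ ModuleCat k) : Type :=
  Σ y : {y : NPoset // supNorm y ≤ n}, M.obj y.1

/-- The canonical low-degree free module covering `M`. -/
noncomputable def Fr (n : ℕ) (M : NPoset ⥤ ModuleCat k) : NPoset ⥤ ModuleCat k :=
  ∐ fun i : FreeIx n M => Pmod k i.1.1

noncomputable def cov (n : ℕ) (M : NPoset ⥤ ModuleCat k) : Fr n M ⟶ M :=
  Sigma.desc fun i => elemHom M i.1.1 i.2

lemma isDirectSum_Fr (n : ℕ) (M : NPoset ⥤ ModuleCat k) :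
    IsDirectSumOfP k (Fr n M) {y | supNorm y ≤ n} :=
  ⟨FreeIx n M, fun i => i.1.1, fun i => i.1.2,
    Sigma.ι (fun i : FreeIx n M => Pmod k i.1.1),
    ⟨coproductIsCoproduct (fun i : FreeIx n M => Pmod k i.1.1)⟩⟩

lemma cov_surjective {n : ℕ} {M : NPoset ⥤ ModuleCat k} (hM : GoodF n M) (z : NPoset) :
    Function.Surjective ((cov n M).app z) := by
  intro m
  obtain ⟨m', rfl⟩ := (hM z).2 m
  refine ⟨(Sigma.ι (fun i : FreeIx n M => Pmod k i.1.1)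
      ⟨⟨tr n z, supNorm_tr_le n z⟩, m'⟩).app z (Finsupp.single (tHom n z) 1), ?_⟩
  have h1 : Sigma.ι (fun i : FreeIx n M => Pmod k i.1.1) ⟨⟨tr n z, supNorm_tr_le n z⟩, m'⟩ ≫
      cov n M = elemHom M (tr n z) m' := Sigma.ι_desc _ _
  have h2 := congrArg (fun (η : Pmod k (tr n z) ⟶ M) => η.app z (Finsupp.single (tHom n z) 1)) h1
  simp only [NatTrans.comp_app] at h2
  have h3 := elemHom_single M (tr n z) m' (tHom n z) 1
  rw [one_smul] at h3
  exact h2.trans h3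

lemma nat_app {A B : NPoset ⥤ ModuleCat k} (f : A ⟶ B) {z z' : NPoset} (h : z ⟶ z')
    (x : A.obj z) : f.app z' (A.map h x) = B.map h (f.app z x) := by
  have := f.naturality h
  exact congrArg (fun (g : A.obj z ⟶ B.obj z') => g x) this

/-- The kernel of a natural transformation, as a functor. -/
noncomputable def KerF {A B : NPoset ⥤ ModuleCat k} (f : A ⟶ B) : NPoset ⥤ ModuleCat k where
  obj z := ModuleCat.of k (LinearMap.ker (f.app z).hom)
  map {z z'} h := ModuleCat.ofHom ((A.map h).hom.restrict (p := LinearMap.ker (f.app z).hom)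
    (q := LinearMap.ker (f.app z').hom) (fun x hx => by
      simp only [LinearMap.mem_ker] at hx ⊢
      show f.app z' (A.map h x) = 0
      rw [nat_app f h x, hx, map_zero]))
  map_id z := by
    apply ModuleCat.hom_ext
    apply LinearMap.ext
    intro x
    apply Subtype.ext
    show (A.map (𝟙 z)) x.1 = x.1
    rw [A.map_id]
    rfl
  map_comp {z z' z''} h h' := by
    apply ModuleCat.hom_ext
    apply LinearMap.ext
    intro x
    apply Subtype.ext
    show (A.map (h ≫ h')) x.1 = (A.map h') ((A.map h) x.1)
    rw [A.map_comp]
    rfl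

noncomputable def kerIncl {A B : NPoset ⥤ ModuleCat k} (f : A ⟶ B) : KerF f ⟶ A where
  app z := ModuleCat.ofHom (LinearMap.ker (f.app z).hom).subtype
  naturality z z' h := rfl

lemma kerIncl_app_eq_zero_iff {A B : NPoset ⥤ ModuleCat k} (f : A ⟶ B) (z : NPoset)
    (x : (KerF f).obj z) : (kerIncl f).app z x = 0 ↔ x = 0 := by
  constructor
  · intro h
    apply Subtype.ext
    exact h
  · rintro rfl; rfl

lemma goodF_KerF {n : ℕ} {A B : NPoset ⥤ ModuleCat k} (f : A ⟶ B) (hA : GoodF n A)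
    (hB : GoodF n B) : GoodF n (KerF f) := by
  intro z
  constructor
  · intro x y hxy
    apply Subtype.ext
    apply (hA z).1
    exact congrArg Subtype.val hxy
  · rintro ⟨a, ha⟩
    obtain ⟨a', rfl⟩ := (hA z).2 a
    have ha' : f.app (tr n z) a' = 0 := by
      apply (hB z).1
      show B.map (tHom n z) (f.app (tr n z) a') = B.map (tHom n z) 0
      rw [← nat_app f (tHom n z) a', map_zero]
      exact ha
    exact ⟨⟨a', ha'⟩, rfl⟩

lemma goodF_of_presentation {n : ℕ} {P1 P0 V : NPoset ⥤ ModuleCat k}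
    (g1 : GoodF n P1) (g0 : GoodF n P0) (d : P1 ⟶ P0) (p : P0 ⟶ V)
    (hsurj : ∀ z, Function.Surjective (p.app z))
    (hexact : ∀ z, Function.Exact (d.app z) (p.app z)) : GoodF n V := by
  intro z
  constructor
  · have key : ∀ v : V.obj (tr n z), V.map (tHom n z) v = 0 → v = 0 := by
      intro v hv
      obtain ⟨a, rfl⟩ := hsurj (tr n z) v
      have h0 : p.app z (P0.map (tHom n z) a) = 0 := by
        rw [nat_app p (tHom n z) a]
        exact hv
      obtain ⟨b, hb⟩ := (hexact z (P0.map (tHom n z) a)).1 h0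
      obtain ⟨b', rfl⟩ := (g1 z).2 b
      have heq : P0.map (tHom n z) (d.app (tr n z) b') = P0.map (tHom n z) a := by
        rw [← nat_app d (tHom n z) b']
        exact hb
      have ha : a = d.app (tr n z) b' := ((g0 z).1 heq).symm
      rw [ha]
      exact (hexact (tr n z) _).2 ⟨b', rfl⟩
    intro v v' hvv
    have h := key (v - v') (by rw [map_sub, hvv, sub_self])
    exact sub_eq_zero.1 h
  · intro v
    obtain ⟨a, rfl⟩ := hsurj z v
    obtain ⟨a', rfl⟩ := (g0 z).2 a
    exact ⟨p.app (tr n z) a', (nat_app p (tHom n z) a').symm⟩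

lemma exact_cov_ker {n : ℕ} {A B : NPoset ⥤ ModuleCat k} (f : A ⟶ B)
    (hK : GoodF n (KerF f)) (z : NPoset) :
    Function.Exact ((cov n (KerF f) ≫ kerIncl f).app z) (f.app z) := by
  intro a
  constructor
  · intro ha
    obtain ⟨x, hx⟩ := cov_surjective hK z (⟨a, ha⟩ : LinearMap.ker (f.app z).hom)
    refine ⟨x, ?_⟩
    show (kerIncl f).app z ((cov n (KerF f)).app z x) = a
    rw [hx]
    rfl
  · rintro ⟨x, rfl⟩
    show f.app z ((kerIncl f).app z ((cov n (KerF f)).app z x)) = 0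
    exact ((cov n (KerF f)).app z x).2

lemma exact_precomp_inj {α β γ δ : Type*} [Zero γ] [Zero δ] {g : α → β} {f : β → γ} {ι : γ → δ}
    (hι : ∀ c, ι c = 0 ↔ c = 0) (h : Function.Exact g f) :
    Function.Exact g (fun b => ι (f b)) := fun b => by rw [hι]; exact h b

/-- The sequence of kernels in the resolution. -/
noncomputable def Kseq (n : ℕ) {V P0 : NPoset ⥤ ModuleCat k} (p : P0 ⟶ V)
    (j : ℕ) : NPoset ⥤ ModuleCat k :=
  Nat.rec (KerF p) (fun _ Kj => KerF (cov n Kj)) j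

/-- The terms of the resolution. -/
noncomputable def Pseq (n : ℕ) {V P0 : NPoset ⥤ ModuleCat k} (p : P0 ⟶ V)
    (j : ℕ) : NPoset ⥤ ModuleCat k :=
  Nat.rec P0 (fun j _ => Fr n (Kseq n p j)) j

/-- The differentials of the resolution. -/
noncomputable def dseq (n : ℕ) {V P0 : NPoset ⥤ ModuleCat k} (p : P0 ⟶ V) :
    ∀ j, Pseq n p (j + 1) ⟶ Pseq n p j
  | 0 => cov n (Kseq n p 0) ≫ kerIncl p
  | (j + 1) => cov n (Kseq n p (j + 1)) ≫ kerIncl (cov n (Kseq n p j))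

/-- An `N`-module presented in degrees `≤ n` (sup norm) has a resolution all of whose terms are
direct sums of modules `P y` with `supNorm y ≤ n`. -/
theorem stmt4 {k : Type} [CommRing k] (V : NPoset ⥤ ModuleCat k) (n : ℕ)
    (hV : PresentedInDeg supNorm V n) :
    HasResolutionBy V (fun _ Q => IsDirectSumOfP k Q {y | supNorm y ≤ n}) := by
  obtain ⟨P1, P0, d, p, hP1, hP0, hsurj, hexact⟩ := hV
  have g1 : GoodF n P1 := goodF_of_isDirectSum hP1
  have g0 : GoodF n P0 := goodF_of_isDirectSum hP0
  have gV : GoodF n V := goodF_of_presentation g1 g0 d p hsurj hexact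
  have gK : ∀ j, GoodF n (Kseq n p j) := by
    intro j
    induction j with
    | zero => exact goodF_KerF p g0 gV
    | succ j ih =>
        exact goodF_KerF (cov n (Kseq n p j))
          (goodF_of_isDirectSum (isDirectSum_Fr n _)) ih
  refine ⟨Pseq n p, dseq n p, p, ?_, hsurj, ?_, ?_⟩
  · rintro (_ | j)
    · exact hP0
    · exact isDirectSum_Fr n _
  · intro z
    exact exact_cov_ker p (gK 0) z
  · rintro (_ | j) z
    · have h := exact_cov_ker (cov n (Kseq n p 0)) (gK 1) z
      show Function.Exact ⇑((dseq n p 1).app z)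
        (fun b => (kerIncl p).app z ((cov n (Kseq n p 0)).app z b))
      exact exact_precomp_inj (kerIncl_app_eq_zero_iff p z) h
    · have h := exact_cov_ker (cov n (Kseq n p (j + 1))) (gK (j + 2)) z
      show Function.Exact ⇑((dseq n p (j + 2)).app z)
        (fun b => (kerIncl (cov n (Kseq n p j))).app z ((cov n (Kseq n p (j + 1))).app z b))
      exact exact_precomp_inj (kerIncl_app_eq_zero_iff (cov n (Kseq n p j)) z) h
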